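/- arXiv:1709.05537 — 3 statements merged into one kernel-verified Lean document; each statement's English description precedes it below -/
import Mathlib

section
/- Picone's identity for the p-Laplacian: For p > 1 and vectors x, y in R^N with y ≠ 0, and nonnegative reals a, b with b > 0, the quantity |x|^p + (p-1)(a^p/b^p)|y|^p - p(a^{p-1}/b^{p-1}) (x · |y|^{p-2} y) is nonnegative. -/
theorem picone_identity_nonneg (N : ℕ) (hN : 1 ≤ N) (p : ℝ) (hp : 1 < p)
    (x y : EuclideanSpace ℝ (Fin N)) (hy : y ≠ 0)
    (a b : ℝ) (ha : 0 ≤ a) (hb : 0 < b) :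
    0 ≤ ‖x‖ ^ p + (p - 1) * (a ^ p / b ^ p) * ‖y‖ ^ p
        - p * (a ^ (p - 1) / b ^ (p - 1)) * (inner ℝ x ((‖y‖ ^ (p - 2)) • y) : ℝ) := by
  have hy0 : (0:ℝ) < ‖y‖ := norm_pos_iff.mpr hy
  set t : ℝ := a / b with ht
  have ht0 : 0 ≤ t := div_nonneg ha hb.le
  have hp0 : (0:ℝ) < p := lt_trans one_pos hp
  set u : ℝ := ‖x‖
  set v : ℝ := t * ‖y‖
  have hu0 : 0 ≤ u := norm_nonneg x
  have hv0 : 0 ≤ v := mul_nonneg ht0 hy0.le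
  -- rewrite the ratios as powers of t
  have hdivp : a ^ p / b ^ p = t ^ p := (Real.div_rpow ha hb.le p).symm
  have hdivp1 : a ^ (p-1) / b ^ (p-1) = t ^ (p-1) := (Real.div_rpow ha hb.le (p-1)).symm
  -- inner product bound
  have hinner : (inner ℝ x ((‖y‖ ^ (p-2)) • y) : ℝ) ≤ ‖y‖ ^ (p-2) * (u * ‖y‖) := by
    rw [real_inner_smul_right]
    exact mul_le_mul_of_nonneg_left (real_inner_le_norm x y) (Real.rpow_nonneg hy0.le _)
  have hny : ‖y‖ ^ (p-2) * ‖y‖ = ‖y‖ ^ (p-1) := by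
    rw [← Real.rpow_add_one hy0.ne' (p-2)]
    congr 1
    ring
  have hv : t ^ (p-1) * ‖y‖ ^ (p-1) = v ^ (p-1) := (Real.mul_rpow ht0 hy0.le).symm
  have hvp : t ^ p * ‖y‖ ^ p = v ^ p := (Real.mul_rpow ht0 hy0.le).symm
  -- Young's inequality
  have hp1 : p - 1 ≠ 0 := by linarith
  have hq : p.HolderConjugate (p / (p-1)) := Real.HolderConjugate.conjExponent hp
  have hyoung : u * v ^ (p-1) ≤ u ^ p / p + (v ^ (p-1)) ^ (p/(p-1)) / (p/(p-1)) :=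
    Real.young_inequality_of_nonneg hu0 (Real.rpow_nonneg hv0 _) hq
  have h1 : (v ^ (p-1)) ^ (p/(p-1)) = v ^ p := by
    rw [← Real.rpow_mul hv0]
    congr 1
    field_simp
  have h2 : (v ^ p) / (p/(p-1)) = (p-1)/p * v ^ p := by
    field_simp
  have hyoung2 : p * (u * v ^ (p-1)) ≤ u ^ p + (p-1) * v ^ p := by
    have := mul_le_mul_of_nonneg_left hyoung hp0.le
    rw [h1, h2] at this
    calc p * (u * v ^ (p-1)) ≤ p * (u ^ p / p + (p-1)/p * v ^ p) := this
      _ = u ^ p + (p-1) * v ^ p := by field_simp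
  -- combine
  have hip : p * (a ^ (p-1) / b ^ (p-1)) * (inner ℝ x ((‖y‖ ^ (p-2)) • y) : ℝ)
      ≤ p * (u * v ^ (p-1)) := by
    rw [hdivp1]
    have key : t ^ (p-1) * (‖y‖ ^ (p-2) * (u * ‖y‖)) = u * v ^ (p-1) := by
      rw [← hv, ← hny]
      ring
    calc p * t ^ (p-1) * (inner ℝ x ((‖y‖ ^ (p-2)) • y) : ℝ)
        ≤ p * t ^ (p-1) * (‖y‖ ^ (p-2) * (u * ‖y‖)) := by
          apply mul_le_mul_of_nonneg_left hinner
          positivity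
      _ = p * (u * v ^ (p-1)) := by rw [mul_assoc, key]
  rw [hdivp]
  have : (p-1) * (t ^ p) * ‖y‖ ^ p = (p-1) * v ^ p := by rw [mul_assoc, hvp]
  rw [this]
  linarith [hip, hyoung2]
end

section
/- Pointwise Picone inequality: For p > 1, vectors x, y in R^N with y ≠ 0, and reals a ≥ 0, b > 0, one has p (a^{p-1}/b^{p-1}) ⟨x, |y|^{p-2} y⟩ - (p-1)(a^p/b^p)|y|^p ≤ |x|^p. -/
theorem picone_pointwise_inequality (N : ℕ) (hN : 1 ≤ N) (p : ℝ) (hp : 1 < p)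
    (x y : EuclideanSpace ℝ (Fin N)) (hy : y ≠ 0)
    (a b : ℝ) (ha : 0 ≤ a) (hb : 0 < b) :
    p * (a ^ (p - 1) / b ^ (p - 1)) * (inner ℝ x ((‖y‖ ^ (p - 2)) • y) : ℝ)
      - (p - 1) * (a ^ p / b ^ p) * ‖y‖ ^ p ≤ ‖x‖ ^ p := by
  have hp0 : (0:ℝ) < p := lt_trans one_pos hp
  have hy0 : (0:ℝ) < ‖y‖ := norm_pos_iff.2 hy
  set t : ℝ := a / b with ht_def
  have ht : 0 ≤ t := div_nonneg ha hb.le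
  have hq := Real.HolderConjugate.conjExponent hp
  set q : ℝ := Real.conjExponent p with hq_def
  -- step 1: bound the inner product
  have h1 : (inner ℝ x ((‖y‖ ^ (p - 2)) • y) : ℝ) ≤ ‖x‖ * ‖y‖ ^ (p - 1) := by
    rw [real_inner_smul_right]
    have h2 : (inner ℝ x y : ℝ) ≤ ‖x‖ * ‖y‖ := real_inner_le_norm x y
    have h3 : (0:ℝ) ≤ ‖y‖ ^ (p - 2) := Real.rpow_nonneg (norm_nonneg y) _
    calc ‖y‖ ^ (p - 2) * (inner ℝ x y : ℝ) ≤ ‖y‖ ^ (p - 2) * (‖x‖ * ‖y‖) := by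
          exact mul_le_mul_of_nonneg_left h2 h3
      _ = ‖x‖ * ‖y‖ ^ (p - 1) := by
          rw [show p - 1 = (p - 2) + 1 by ring, Real.rpow_add hy0, Real.rpow_one]; ring
  -- rewrite coefficients using t
  have hcoef : a ^ (p - 1) / b ^ (p - 1) = t ^ (p - 1) :=
    (Real.div_rpow ha hb.le _).symm
  have hcoef' : a ^ p / b ^ p = t ^ p := (Real.div_rpow ha hb.le _).symm
  rw [hcoef, hcoef']
  have htp : (0:ℝ) ≤ t ^ (p - 1) := Real.rpow_nonneg ht _
  have step : p * t ^ (p - 1) * (inner ℝ x ((‖y‖ ^ (p - 2)) • y) : ℝ)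
      ≤ p * (‖x‖ * (t * ‖y‖) ^ (p - 1)) := by
    have := mul_le_mul_of_nonneg_left h1 (by positivity : (0:ℝ) ≤ p * t ^ (p - 1))
    calc p * t ^ (p - 1) * (inner ℝ x ((‖y‖ ^ (p - 2)) • y) : ℝ)
        ≤ p * t ^ (p - 1) * (‖x‖ * ‖y‖ ^ (p - 1)) := this
      _ = p * (‖x‖ * (t * ‖y‖) ^ (p - 1)) := by
          rw [Real.mul_rpow ht (norm_nonneg y)]; ring
  have hty : (0:ℝ) ≤ t * ‖y‖ := mul_nonneg ht (norm_nonneg y)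
  have young := Real.young_inequality_of_nonneg (norm_nonneg x)
      (Real.rpow_nonneg hty (p - 1)) hq
  have hpow : ((t * ‖y‖) ^ (p - 1)) ^ q = (t * ‖y‖) ^ p := by
    rw [← Real.rpow_mul hty, hq.sub_one_mul_conj]
  rw [hpow] at young
  -- young : ‖x‖ * (t*‖y‖)^(p-1) ≤ ‖x‖^p / p + (t*‖y‖)^p / q
  have hq_eq : q = p / (p - 1) := rfl
  have hq_pos : 0 < q := hq.symm.pos
  have key : p * (‖x‖ * (t * ‖y‖) ^ (p - 1)) ≤ ‖x‖ ^ p + (p - 1) * (t * ‖y‖) ^ p := by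
    have := mul_le_mul_of_nonneg_left young hp0.le
    calc p * (‖x‖ * (t * ‖y‖) ^ (p - 1))
        ≤ p * (‖x‖ ^ p / p + (t * ‖y‖) ^ p / q) := this
      _ = ‖x‖ ^ p + (p - 1) * (t * ‖y‖) ^ p := by
          rw [hq_eq]
          field_simp
  have hfinal : t ^ p * ‖y‖ ^ p = (t * ‖y‖) ^ p := (Real.mul_rpow ht (norm_nonneg y)).symm
  nlinarith [step, key, hfinal]
end

section
/- For the function f(t) = t^{p*-1}/(ln(e+t))^α with α > 0, lim_{t→+∞} (p* F(t) - t f(t))/(t f(t) H(t)) = α/p*, where F(t) = ∫₀ᵗ f and H(t) = 1/ln(e+t). -/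
open Filter Real Set intervalIntegral Topology MeasureTheory

noncomputable def lA (t : ℝ) : ℝ := Real.log (Real.exp 1 + t)
noncomputable def fA (p a t : ℝ) : ℝ := t ^ (p - 1) / lA t ^ a
noncomputable def GA (p a t : ℝ) : ℝ := p * (∫ s in (0:ℝ)..t, fA p a s) - t * fA p a t
noncomputable def DA (p a t : ℝ) : ℝ := t ^ p / lA t ^ (a + 1)
noncomputable def g1A (p a x : ℝ) : ℝ := a * x ^ p / (lA x ^ (a + 1) * (Real.exp 1 + x))
noncomputable def g2A (p a x : ℝ) : ℝ :=
  p * x ^ (p - 1) / lA x ^ (a + 1) - (a + 1) * x ^ p / (lA x ^ (a + 2) * (Real.exp 1 + x))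

lemma expx_pos {x : ℝ} (hx : 0 ≤ x) : 0 < Real.exp 1 + x := by
  have := Real.exp_pos 1; linarith

lemma lA_ge_one {t : ℝ} (ht : 0 ≤ t) : 1 ≤ lA t := by
  rw [lA]
  calc (1:ℝ) = Real.log (Real.exp 1) := (Real.log_exp 1).symm
    _ ≤ Real.log (Real.exp 1 + t) := Real.log_le_log (Real.exp_pos 1) (by linarith)

lemma lA_pos {t : ℝ} (ht : 0 ≤ t) : 0 < lA t := lt_of_lt_of_le one_pos (lA_ge_one ht)

lemma hasDerivAt_lA {x : ℝ} (hx : 0 ≤ x) :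
    HasDerivAt lA (1 / (Real.exp 1 + x)) x :=
  ((hasDerivAt_id x).const_add (Real.exp 1)).log (expx_pos hx).ne'

lemma continuousAt_lA {x : ℝ} (hx : 0 ≤ x) : ContinuousAt lA x := (hasDerivAt_lA hx).continuousAt

lemma continuousAt_fA {p a x : ℝ} (hp : 1 ≤ p) (hx : 0 ≤ x) : ContinuousAt (fA p a) x := by
  apply ContinuousAt.div
  · exact Real.continuousAt_rpow_const x (p - 1) (Or.inr (by linarith))
  · exact (continuousAt_lA hx).rpow_const (Or.inl (lA_pos hx).ne')
  · exact (Real.rpow_pos_of_pos (lA_pos hx) a).ne'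

lemma continuousOn_fA {p a : ℝ} (hp : 1 ≤ p) : ContinuousOn (fA p a) (Set.Ici 0) :=
  fun x hx => (continuousAt_fA hp hx).continuousWithinAt

lemma rpow_shift {x : ℝ} (hx : x ≠ 0) (q : ℝ) : x ^ q = x ^ (q - 1) * x := by
  rw [← Real.rpow_add_one hx (q - 1)]; ring_nf

lemma hasDerivAt_DA {p a x : ℝ} (hx : 0 < x) :
    HasDerivAt (DA p a) (g2A p a x) x := by
  have hL1 : 1 ≤ lA x := lA_ge_one hx.le
  have hL0 : 0 < lA x := lA_pos hx.le
  have hex : 0 < Real.exp 1 + x := expx_pos hx.le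
  have hxp : HasDerivAt (fun t : ℝ => t ^ p) (p * x ^ (p - 1)) x :=
    Real.hasDerivAt_rpow_const (Or.inl hx.ne')
  have hLp : HasDerivAt (fun t => lA t ^ (a + 1)) (1 / (Real.exp 1 + x) * (a + 1) * lA x ^ (a + 1 - 1)) x :=
    (hasDerivAt_lA hx.le).rpow_const (Or.inl hL0.ne')
  have h := hxp.div hLp (Real.rpow_pos_of_pos hL0 (a + 1)).ne'
  refine h.congr_deriv (Eq.symm ?_)
  rw [g2A]
  have e1 : x ^ p = x ^ (p - 1) * x := rpow_shift hx.ne' p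
  have e2 : lA x ^ (a + 1) = lA x ^ (a + 1 - 1) * lA x := rpow_shift hL0.ne' (a + 1)
  have e3 : lA x ^ (a + 2) = lA x ^ (a + 1 - 1) * lA x * lA x := by
    rw [← e2, rpow_shift hL0.ne' (a + 2)]; ring_nf
  have hB : lA x ^ (a + 1 - 1) ≠ 0 := (Real.rpow_pos_of_pos hL0 _).ne'
  rw [e1, e2, e3]
  field_simp

lemma hasDerivAt_GA {p a x : ℝ} (hp : 1 < p) (hx : 0 < x) :
    HasDerivAt (GA p a) (g1A p a x) x := by
  have hL1 : 1 ≤ lA x := lA_ge_one hx.le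
  have hL0 : 0 < lA x := lA_pos hx.le
  have hex : 0 < Real.exp 1 + x := expx_pos hx.le
  -- derivative of fA
  have hx1 : HasDerivAt (fun t : ℝ => t ^ (p - 1)) ((p - 1) * x ^ (p - 1 - 1)) x :=
    Real.hasDerivAt_rpow_const (Or.inl hx.ne')
  have hLa : HasDerivAt (fun t => lA t ^ a) (1 / (Real.exp 1 + x) * a * lA x ^ (a - 1)) x :=
    (hasDerivAt_lA hx.le).rpow_const (Or.inl hL0.ne')
  have hf' : HasDerivAt (fA p a)
      (((p - 1) * x ^ (p - 1 - 1) * lA x ^ a -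
        x ^ (p - 1) * (1 / (Real.exp 1 + x) * a * lA x ^ (a - 1))) / (lA x ^ a) ^ 2) x :=
    hx1.div hLa (Real.rpow_pos_of_pos hL0 a).ne'
  -- derivative of the integral
  have hint : IntervalIntegrable (fA p a) volume 0 x := by
    apply (ContinuousOn.mono (continuousOn_fA hp.le) _).intervalIntegrable
    rw [Set.uIcc_of_le hx.le]
    exact fun y hy => hy.1
  have hmeas : StronglyMeasurableAtFilter (fA p a) (𝓝 x) := by
    refine ⟨Set.Ioi 0, Ioi_mem_nhds hx, ?_⟩
    exact ((continuousOn_fA hp.le).mono (fun y hy => le_of_lt hy)).aestronglyMeasurable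
      measurableSet_Ioi
  have hF : HasDerivAt (fun u => ∫ s in (0:ℝ)..u, fA p a s) (fA p a x) x :=
    intervalIntegral.integral_hasDerivAt_right hint hmeas (continuousAt_fA hp.le hx.le)
  have hmul : HasDerivAt (fun t => t * fA p a t)
      (1 * fA p a x + x * (((p - 1) * x ^ (p - 1 - 1) * lA x ^ a -
        x ^ (p - 1) * (1 / (Real.exp 1 + x) * a * lA x ^ (a - 1))) / (lA x ^ a) ^ 2)) x :=
    (hasDerivAt_id x).mul hf'
  have hG := (hF.const_mul p).sub hmul
  refine hG.congr_deriv (Eq.symm ?_)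
  rw [g1A, fA]
  have e1 : x ^ (p - 1) = x ^ (p - 1 - 1) * x := rpow_shift hx.ne' (p - 1)
  have e2 : x ^ p = x ^ (p - 1 - 1) * x * x := by rw [← e1, rpow_shift hx.ne' p]
  have e3 : lA x ^ a = lA x ^ (a - 1) * lA x := rpow_shift hL0.ne' a
  have e4 : lA x ^ (a + 1) = lA x ^ (a - 1) * lA x * lA x := by
    rw [← e3, rpow_shift hL0.ne' (a + 1)]; ring_nf
  have hB : lA x ^ (a - 1) ≠ 0 := (Real.rpow_pos_of_pos hL0 _).ne'
  rw [e1, e2, e3, e4]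
  field_simp
  ring

lemma g1A_eq {p a x : ℝ} (hx : 0 < x) :
    g1A p a x = (x ^ (p - 1) / lA x ^ (a + 1)) * (a * (x / (Real.exp 1 + x))) := by
  have hL0 : 0 < lA x := lA_pos hx.le
  have hex : 0 < Real.exp 1 + x := expx_pos hx.le
  rw [g1A, rpow_shift hx.ne' p]
  field_simp

lemma g2A_eq {p a x : ℝ} (hx : 0 < x) :
    g2A p a x = (x ^ (p - 1) / lA x ^ (a + 1)) *
      (p - (a + 1) * (x / (Real.exp 1 + x)) * (lA x)⁻¹) := by
  have hL0 : 0 < lA x := lA_pos hx.le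
  have hex : 0 < Real.exp 1 + x := expx_pos hx.le
  have e2 : lA x ^ (a + 2) = lA x ^ (a + 1) * lA x := by
    rw [rpow_shift hL0.ne' (a + 2)]; ring_nf
  rw [g2A, rpow_shift hx.ne' p, e2]
  have hA : lA x ^ (a + 1) ≠ 0 := (Real.rpow_pos_of_pos hL0 _).ne'
  field_simp

lemma continuousAt_g1A {p a x : ℝ} (hx : 0 < x) : ContinuousAt (g1A p a) x := by
  have hL0 : 0 < lA x := lA_pos hx.le
  have hex : 0 < Real.exp 1 + x := expx_pos hx.le
  apply ContinuousAt.div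
  · exact continuousAt_const.mul (Real.continuousAt_rpow_const x p (Or.inl hx.ne'))
  · exact (((continuousAt_lA hx.le).rpow_const (Or.inl hL0.ne'))).mul
      (continuousAt_const.add continuousAt_id)
  · positivity
lemma continuousAt_g2A {p a x : ℝ} (hx : 0 < x) : ContinuousAt (g2A p a) x := by
  have hL0 : 0 < lA x := lA_pos hx.le
  have hex : 0 < Real.exp 1 + x := expx_pos hx.le
  apply ContinuousAt.sub
  · apply ContinuousAt.div
    · exact continuousAt_const.mul (Real.continuousAt_rpow_const x (p-1) (Or.inl hx.ne'))
    · exact ((continuousAt_lA hx.le).rpow_const (Or.inl hL0.ne'))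
    · positivity
  · apply ContinuousAt.div
    · exact continuousAt_const.mul (Real.continuousAt_rpow_const x p (Or.inl hx.ne'))
    · exact (((continuousAt_lA hx.le).rpow_const (Or.inl hL0.ne'))).mul
        (continuousAt_const.add continuousAt_id)
    · positivity

lemma tendsto_lA_atTop : Tendsto lA atTop atTop :=
  Real.tendsto_log_atTop.comp (tendsto_atTop_add_const_left atTop (Real.exp 1) tendsto_id)

lemma tendsto_xdiv : Tendsto (fun x : ℝ => x / (Real.exp 1 + x)) atTop (𝓝 1) := by
  have h0 : Tendsto (fun x : ℝ => Real.exp 1 / (Real.exp 1 + x)) atTop (𝓝 0) :=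
    Tendsto.div_atTop tendsto_const_nhds (tendsto_atTop_add_const_left atTop (Real.exp 1) tendsto_id)
  have h1 : Tendsto (fun x : ℝ => 1 - Real.exp 1 / (Real.exp 1 + x)) atTop (𝓝 (1 - 0)) :=
    tendsto_const_nhds.sub h0
  rw [sub_zero] at h1
  refine h1.congr' ?_
  filter_upwards [eventually_ge_atTop (0:ℝ)] with x hx
  have hex : 0 < Real.exp 1 + x := expx_pos hx
  field_simp; ring

lemma tendsto_DA_atTop {p a : ℝ} (hp : 0 < p) : Tendsto (DA p a) atTop atTop := by
  have h1 : Tendsto (fun x : ℝ => (Real.log x) ^ (a + 1) / x ^ p) atTop (𝓝 0) :=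
    (isLittleO_log_rpow_rpow_atTop (a + 1) hp).tendsto_div_nhds_zero
  have h2 : Tendsto (fun x : ℝ => (Real.log x) ^ (a + 1) / x ^ p) atTop (𝓝[>] 0) := by
    rw [tendsto_nhdsWithin_iff]
    refine ⟨h1, ?_⟩
    filter_upwards [eventually_gt_atTop (1:ℝ)] with x hx
    have hlog : 0 < Real.log x := Real.log_pos hx
    have : 0 < x := by linarith
    exact div_pos (Real.rpow_pos_of_pos hlog _) (Real.rpow_pos_of_pos this _)
  have h3 : Tendsto (fun x : ℝ => x ^ p / (Real.log x) ^ (a + 1)) atTop atTop := by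
    refine h2.inv_tendsto_nhdsGT_zero.congr' ?_
    filter_upwards [eventually_gt_atTop (1:ℝ)] with x hx
    simp [inv_div]
  have h4 : Tendsto (fun t : ℝ => (Real.exp 1 + t) ^ p / lA t ^ (a + 1)) atTop atTop := by
    have := h3.comp (tendsto_atTop_add_const_left atTop (Real.exp 1) tendsto_id)
    exact this.congr (fun t => by simp [lA, Function.comp])
  have h5 : Tendsto (fun t : ℝ => (2:ℝ) ^ (-p) * ((Real.exp 1 + t) ^ p / lA t ^ (a + 1)))
      atTop atTop := h4.const_mul_atTop (Real.rpow_pos_of_pos two_pos _)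
  apply tendsto_atTop_mono' atTop _ h5
  filter_upwards [eventually_ge_atTop (Real.exp 1)] with t ht
  have ht0 : 0 < t := lt_of_lt_of_le (Real.exp_pos 1) ht
  have hL0 : 0 < lA t := lA_pos ht0.le
  have hLp : 0 < lA t ^ (a + 1) := Real.rpow_pos_of_pos hL0 _
  have h6 : (Real.exp 1 + t) ^ p ≤ (2 * t) ^ p :=
    Real.rpow_le_rpow (by positivity) (by linarith) hp.le
  have h7 : (2 * t) ^ p = 2 ^ p * t ^ p := Real.mul_rpow (by norm_num) ht0.le
  have h8 : (2:ℝ) ^ (-p) * (Real.exp 1 + t) ^ p ≤ t ^ p := by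
    have h9 : (2:ℝ) ^ (-p) * (2 ^ p * t ^ p) = t ^ p := by
      rw [← mul_assoc, ← Real.rpow_add two_pos]
      norm_num
    calc (2:ℝ) ^ (-p) * (Real.exp 1 + t) ^ p ≤ (2:ℝ) ^ (-p) * (2 ^ p * t ^ p) := by
          rw [h7] at h6
          exact mul_le_mul_of_nonneg_left h6 (by positivity)
      _ = t ^ p := h9
  rw [DA, mul_div_assoc']
  exact div_le_div_of_nonneg_right h8 hLp.le |>.trans_eq rfl


lemma stolz_integral (f g : ℝ → ℝ) (a l : ℝ)
    (hfc : ContinuousOn f (Set.Ici a)) (hgc : ContinuousOn g (Set.Ici a))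
    (hgpos : ∀ x, a ≤ x → 0 < g x)
    (hgtop : Tendsto (fun t => ∫ x in a..t, g x) atTop atTop)
    (hfg : Tendsto (fun x => f x / g x) atTop (𝓝 l)) :
    Tendsto (fun t => (∫ x in a..t, f x) / (∫ x in a..t, g x)) atTop (𝓝 l) := by
  have hsub : ∀ s t : ℝ, a ≤ s → a ≤ t → Set.uIcc s t ⊆ Set.Ici a := by
    intro s t hs ht x hx
    exact le_trans (le_min hs ht) hx.1
  have hfint : ∀ s t, a ≤ s → a ≤ t → IntervalIntegrable f MeasureTheory.volume s t :=
    fun s t hs ht => (hfc.mono (hsub s t hs ht)).intervalIntegrable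
  have hgint : ∀ s t, a ≤ s → a ≤ t → IntervalIntegrable g MeasureTheory.volume s t :=
    fun s t hs ht => (hgc.mono (hsub s t hs ht)).intervalIntegrable
  -- key little-o claim
  have key : (fun t => (∫ x in a..t, f x) - l * ∫ x in a..t, g x) =o[atTop]
      (fun t => ∫ x in a..t, g x) := by
    rw [Asymptotics.isLittleO_iff]
    intro ε hε
    obtain ⟨N, hN⟩ := (Filter.eventually_atTop).1
      (hfg.eventually (Metric.ball_mem_nhds l (half_pos hε)))
    set b := max a N with hb
    have hab : a ≤ b := le_max_left _ _
    have hbound : ∀ x, b ≤ x → |f x - l * g x| ≤ ε / 2 * g x := by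
      intro x hx
      have hax : a ≤ x := le_trans hab hx
      have hgx := hgpos x hax
      have h1 : |f x / g x - l| < ε / 2 := by
        have := hN x (le_trans (le_max_right a N) hx)
        simpa [Real.dist_eq] using this
      have : f x - l * g x = (f x / g x - l) * g x := by
        field_simp
      rw [this, abs_mul, abs_of_pos hgx]
      exact mul_le_mul_of_nonneg_right h1.le hgx.le
    set C := |(∫ x in a..b, f x) - l * ∫ x in a..b, g x| with hC
    filter_upwards [hgtop.eventually_ge_atTop (2 / ε * C), Filter.eventually_ge_atTop b]
      with t hIg hbt
    have hat : a ≤ t := le_trans hab hbt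
    have hsplitf : (∫ x in a..t, f x) = (∫ x in a..b, f x) + ∫ x in b..t, f x :=
      (integral_add_adjacent_intervals (hfint a b le_rfl hab)
        (hfint b t hab hat)).symm
    have hsplitg : (∫ x in a..t, g x) = (∫ x in a..b, g x) + ∫ x in b..t, g x :=
      (integral_add_adjacent_intervals (hgint a b le_rfl hab)
        (hgint b t hab hat)).symm
    have hIgb_nonneg : 0 ≤ ∫ x in a..b, g x :=
      integral_nonneg hab (fun x hx => (hgpos x hx.1).le)
    have hIg_nonneg : 0 ≤ ∫ x in a..t, g x :=
      integral_nonneg hat (fun x hx => (hgpos x hx.1).le)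
    have hmid : |∫ x in b..t, f x - l * g x| ≤ ε / 2 * ∫ x in a..t, g x := by
      calc |∫ x in b..t, f x - l * g x| ≤ ∫ x in b..t, |f x - l * g x| :=
            intervalIntegral.abs_integral_le_integral_abs hbt
        _ ≤ ∫ x in b..t, ε / 2 * g x := by
            apply intervalIntegral.integral_mono_on hbt
            · exact (((hfint b t hab hat).sub ((hgint b t hab hat).const_mul l)).abs)
            · exact (hgint b t hab hat).const_mul _
            · intro x hx
              exact hbound x hx.1
        _ = ε / 2 * ∫ x in b..t, g x := intervalIntegral.integral_const_mul _ _
        _ ≤ ε / 2 * ∫ x in a..t, g x := by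
            apply mul_le_mul_of_nonneg_left _ (half_pos hε).le
            rw [hsplitg]; linarith
    have hCle : C ≤ ε / 2 * ∫ x in a..t, g x := by
      rcases le_or_gt C 0 with h | h
      · exact le_trans h (by positivity)
      · have h2 : 2 / ε * C ≤ ∫ x in a..t, g x := hIg
        rw [div_mul_eq_mul_div, div_le_iff₀ hε] at h2
        nlinarith
    have : (∫ x in a..t, f x) - l * ∫ x in a..t, g x =
        ((∫ x in a..b, f x) - l * ∫ x in a..b, g x) + ∫ x in b..t, (f x - l * g x) := by
      rw [hsplitf, hsplitg, intervalIntegral.integral_sub (hfint b t hab hat)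
        ((hgint b t hab hat).const_mul l), intervalIntegral.integral_const_mul]
      ring
    rw [Real.norm_eq_abs, Real.norm_eq_abs, this, abs_of_nonneg hIg_nonneg]
    calc |((∫ x in a..b, f x) - l * ∫ x in a..b, g x) + ∫ x in b..t, (f x - l * g x)|
        ≤ C + |∫ x in b..t, (f x - l * g x)| := by rw [hC]; exact abs_add_le _ _
      _ ≤ ε / 2 * (∫ x in a..t, g x) + ε / 2 * (∫ x in a..t, g x) := add_le_add hCle hmid
      _ = ε * ∫ x in a..t, g x := by ring
  have hzero := key.tendsto_div_nhds_zero
  have hne : ∀ᶠ t in atTop, (∫ x in a..t, g x) ≠ 0 :=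
    (hgtop.eventually_ge_atTop 1).mono (fun t ht => by linarith)
  have : Tendsto (fun t => ((∫ x in a..t, f x) - l * ∫ x in a..t, g x) /
      (∫ x in a..t, g x) + l) atTop (𝓝 (0 + l)) := hzero.add tendsto_const_nhds
  rw [zero_add] at this
  refine this.congr' ?_
  filter_upwards [hne] with t ht
  field_simp; ring

theorem H3pp_example_limit (pstar α : ℝ) (hpstar : 1 < pstar) (hα : 0 < α) :
    Filter.Tendsto
      (fun t : ℝ =>
        (pstar * (∫ s in (0:ℝ)..t, s ^ (pstar - 1) / (Real.log (Real.exp 1 + s)) ^ α)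
            - t * (t ^ (pstar - 1) / (Real.log (Real.exp 1 + t)) ^ α)) /
          (t * (t ^ (pstar - 1) / (Real.log (Real.exp 1 + t)) ^ α) *
            (1 / Real.log (Real.exp 1 + t))))
      Filter.atTop (nhds (α / pstar)) := by
  have hp0 : 0 < pstar := by linarith
  -- limit of the bracket in the factorization of g2A
  have hinv : Tendsto (fun x : ℝ => (lA x)⁻¹) atTop (𝓝 0) := tendsto_lA_atTop.inv_tendsto_atTop
  have hbr : Tendsto (fun x : ℝ =>
      pstar - (α + 1) * (x / (Real.exp 1 + x)) * (lA x)⁻¹) atTop (𝓝 pstar) := by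
    have h := (tendsto_const_nhds (x := pstar) (f := atTop)).sub
      (((tendsto_const_nhds (x := α + 1) (f := atTop)).mul tendsto_xdiv).mul hinv)
    have he : pstar - (α + 1) * 1 * 0 = pstar := by ring
    rwa [he] at h
  have hratio0 : Tendsto (fun x : ℝ => (α * (x / (Real.exp 1 + x))) /
      (pstar - (α + 1) * (x / (Real.exp 1 + x)) * (lA x)⁻¹)) atTop (𝓝 (α / pstar)) := by
    have h := ((tendsto_const_nhds (x := α) (f := atTop)).mul tendsto_xdiv).div hbr hp0.ne'
    have he : α * 1 = α := by ring
    rwa [he] at h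
  obtain ⟨a₀, ha₀⟩ := Filter.eventually_atTop.1
    (hbr.eventually (lt_mem_nhds (show pstar / 2 < pstar by linarith)))
  set a := max a₀ 1 with ha
  have ha1 : (1:ℝ) ≤ a := le_max_right _ _
  have hax : ∀ x, a ≤ x → 0 < x := fun x hx => lt_of_lt_of_le one_pos (le_trans ha1 hx)
  have hbrpos : ∀ x, a ≤ x →
      0 < pstar - (α + 1) * (x / (Real.exp 1 + x)) * (lA x)⁻¹ := fun x hx =>
    lt_trans (by linarith) (ha₀ x (le_trans (le_max_left _ _) hx))
  have hg2pos : ∀ x, a ≤ x → 0 < g2A pstar α x := by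
    intro x hx
    have hx0 := hax x hx
    rw [g2A_eq hx0]
    exact mul_pos (div_pos (Real.rpow_pos_of_pos hx0 _)
      (Real.rpow_pos_of_pos (lA_pos hx0.le) _)) (hbrpos x hx)
  have hg1c : ContinuousOn (g1A pstar α) (Set.Ici a) :=
    fun x hx => (continuousAt_g1A (hax x hx)).continuousWithinAt
  have hg2c : ContinuousOn (g2A pstar α) (Set.Ici a) :=
    fun x hx => (continuousAt_g2A (hax x hx)).continuousWithinAt
  -- FTC identities
  have hid1 : ∀ t, a ≤ t → (∫ x in a..t, g1A pstar α x) = GA pstar α t - GA pstar α a := by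
    intro t ht
    apply intervalIntegral.integral_eq_sub_of_hasDerivAt
    · intro x hx
      rw [Set.uIcc_of_le ht] at hx
      exact hasDerivAt_GA hpstar (hax x hx.1)
    · apply (hg1c.mono ?_).intervalIntegrable
      rw [Set.uIcc_of_le ht]; exact fun y hy => hy.1
  have hid2 : ∀ t, a ≤ t → (∫ x in a..t, g2A pstar α x) = DA pstar α t - DA pstar α a := by
    intro t ht
    apply intervalIntegral.integral_eq_sub_of_hasDerivAt
    · intro x hx
      rw [Set.uIcc_of_le ht] at hx
      exact hasDerivAt_DA (hax x hx.1)
    · apply (hg2c.mono ?_).intervalIntegrable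
      rw [Set.uIcc_of_le ht]; exact fun y hy => hy.1
  have hDtop : Tendsto (DA pstar α) atTop atTop := tendsto_DA_atTop hp0
  have hgtop : Tendsto (fun t => ∫ x in a..t, g2A pstar α x) atTop atTop := by
    have h := tendsto_atTop_add_const_right atTop (-(DA pstar α a)) hDtop
    refine Tendsto.congr' ?_ h
    filter_upwards [eventually_ge_atTop a] with t ht
    rw [hid2 t ht]; ring
  have hfg : Tendsto (fun x => g1A pstar α x / g2A pstar α x) atTop (𝓝 (α / pstar)) := by
    refine hratio0.congr' ?_
    filter_upwards [eventually_ge_atTop a] with x hx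
    have hx0 := hax x hx
    have hcne : x ^ (pstar - 1) / lA x ^ (α + 1) ≠ 0 :=
      (div_pos (Real.rpow_pos_of_pos hx0 _) (Real.rpow_pos_of_pos (lA_pos hx0.le) _)).ne'
    rw [g1A_eq hx0, g2A_eq hx0, mul_div_mul_left _ _ hcne]
  have hstolz := stolz_integral _ _ a (α / pstar) hg1c hg2c hg2pos hgtop hfg
  have hmain : Tendsto (fun t => (GA pstar α t - GA pstar α a) /
      (DA pstar α t - DA pstar α a)) atTop (𝓝 (α / pstar)) := by
    refine hstolz.congr' ?_
    filter_upwards [eventually_ge_atTop a] with t ht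
    rw [hid1 t ht, hid2 t ht]
  have hzero1 : Tendsto (fun t => DA pstar α a / DA pstar α t) atTop (𝓝 0) :=
    tendsto_const_nhds.div_atTop hDtop
  have hzero2 : Tendsto (fun t => GA pstar α a / DA pstar α t) atTop (𝓝 0) :=
    tendsto_const_nhds.div_atTop hDtop
  have hfin : Tendsto (fun t =>
      (GA pstar α t - GA pstar α a) / (DA pstar α t - DA pstar α a) *
        (1 - DA pstar α a / DA pstar α t) + GA pstar α a / DA pstar α t) atTop
      (𝓝 (α / pstar * (1 - 0) + 0)) :=
    (hmain.mul (tendsto_const_nhds.sub hzero1)).add hzero2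
  rw [sub_zero, mul_one, add_zero] at hfin
  refine hfin.congr' ?_
  filter_upwards [eventually_ge_atTop a,
    hDtop.eventually_gt_atTop (|DA pstar α a| + 1)] with t hta hDt
  have ht0 : 0 < t := hax t hta
  have habs := le_abs_self (DA pstar α a)
  have habs2 := abs_nonneg (DA pstar α a)
  have hDne : DA pstar α t ≠ 0 := by linarith
  have hDSne : DA pstar α t - DA pstar α a ≠ 0 := by linarith
  have key : (GA pstar α t - GA pstar α a) / (DA pstar α t - DA pstar α a) *
        (1 - DA pstar α a / DA pstar α t) + GA pstar α a / DA pstar α t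
      = GA pstar α t / DA pstar α t := by
    field_simp; ring
  rw [key]
  have hL0 : (0:ℝ) < Real.log (Real.exp 1 + t) := lA_pos ht0.le
  have hLαne : Real.log (Real.exp 1 + t) ^ α ≠ 0 := (Real.rpow_pos_of_pos hL0 α).ne'
  have e1 : t ^ pstar = t ^ (pstar - 1) * t := rpow_shift ht0.ne' pstar
  have e2 : Real.log (Real.exp 1 + t) ^ (α + 1)
      = Real.log (Real.exp 1 + t) ^ α * Real.log (Real.exp 1 + t) := by
    rw [rpow_shift hL0.ne' (α + 1)]; norm_num
  have hden : t * (t ^ (pstar - 1) / Real.log (Real.exp 1 + t) ^ α) *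
      (1 / Real.log (Real.exp 1 + t)) = t ^ pstar / Real.log (Real.exp 1 + t) ^ (α + 1) := by
    rw [e1, e2]
    field_simp
  simp only [GA, DA, fA, lA]
  rw [← hden]
end
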